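/- Suppose agent a's observation record R stops at the end of finite play ρ and its last entry is (|ρ|−1, o). Then for all finite plays ρ', ρ'' that extend ρ (i.e. have ρ as a prefix), ρ' and ρ'' are related by the static perfect-recall relation for observation o if and only if they are related by the dynamic-observation relation ≈ᴿₐ. -/

import Mathlib

variable {V Obs : Type*}

/-- The observation changes recorded at time `n`. -/
def obsAt (rec : List (ℕ × Obs)) (n : ℕ) : List Obs :=
  (rec.filter (fun e => e.1 = n)).map Prod.snd

/-- The observation sequence with which the agent observes the game at time `n`. -/
def obsSeq (rec : List (ℕ × Obs)) : ℕ → List Obs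
  | 0 => obsAt rec 0
  | n + 1 => (obsSeq rec n).getLast?.toList ++ obsAt rec (n + 1)

/-- Dynamic-observation indistinguishability on finite plays. -/
def dynEq (interp : Obs → V → V → Prop) (rec : List (ℕ × Obs))
    (ρ ρ' : List V) : Prop :=
  ρ.length = ρ'.length ∧
  ∀ (i : ℕ) (h : i < ρ.length) (h' : i < ρ'.length),
    ∀ o ∈ obsSeq rec i, interp o (ρ.get ⟨i, h⟩) (ρ'.get ⟨i, h'⟩)

/-- Static perfect-recall indistinguishability for a fixed observation. -/
def staticEq (interp : Obs → V → V → Prop) (o : Obs) (ρ ρ' : List V) : Prop :=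
  List.Forall₂ (interp o) ρ ρ'

/-- If the record stops at the end of `ρ` and its last entry is `(|ρ|-1, o)`,
then on extensions of `ρ` the static relation for `o` coincides with the
dynamic relation of the record. -/
theorem static_eq_dynamic_on_suffixes (interp : Obs → V → V → Prop)
    (hinterp : ∀ o, Equivalence (interp o))
    (rec : List (ℕ × Obs)) (ρ : List V) (o : Obs)
    (hne : ρ ≠ []) (hrecne : rec ≠ [])
    (hstops : ∀ e ∈ rec, e.1 ≤ ρ.length - 1)
    (hlast : rec.getLast hrecne = (ρ.length - 1, o))
    (hseq : ∀ i ≤ ρ.length - 1, obsSeq rec i ≠ []) :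
    ∀ ρ' ρ'' : List V, ρ <+: ρ' → ρ <+: ρ'' →
      (staticEq interp o ρ' ρ'' ↔ dynEq interp rec ρ' ρ'') := by

  intro ρ' ρ'' hp hp'
  set n := ρ.length - 1 with hn
  have hL : ρ.length = n + 1 := (Nat.succ_pred_eq_of_pos (List.length_pos_iff.mpr hne)).symm
  -- obsAt is empty beyond time n
  have hAt : ∀ m, n < m → obsAt rec m = [] := by
    intro m hm
    have : rec.filter (fun e => e.1 = m) = [] := by
      rw [List.filter_eq_nil_iff]
      intro e he
      simp only [decide_eq_true_eq]
      exact fun h => absurd (hstops e he) (by omega)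
    simp [obsAt, this]
  -- last of obsSeq rec n is o
  have hrec : rec = rec.dropLast ++ [(n, o)] := by
    conv_lhs => rw [← List.dropLast_append_getLast hrecne]
    rw [hlast]
  have hAtn : (obsAt rec n).getLast? = some o := by
    rw [obsAt]
    conv_lhs => rw [hrec]
    rw [List.filter_append, List.map_append]
    have : List.filter (fun e => decide (e.1 = n)) [((n : ℕ), o)] = [(n, o)] := by simp
    rw [this]
    simp [List.getLast?_concat]
  have hLastn : (obsSeq rec n).getLast? = some o := by
    rcases Nat.eq_zero_or_pos n with h0 | hpos
    · rw [h0] at hAtn ⊢; simpa [obsSeq] using hAtn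
    · have hm : n = (n - 1) + 1 := (Nat.succ_pred_eq_of_pos hpos).symm
      rw [hm] at hAtn ⊢
      rw [obsSeq, List.getLast?_append, hAtn]
      rfl
  -- beyond time n, obsSeq is [o]
  have hHigh : ∀ k, obsSeq rec (n + 1 + k) = [o] := by
    intro k
    induction k with
    | zero => simp [obsSeq, hLastn, hAt (n + 1) (by omega)]
    | succ k ih =>
      have : n + 1 + (k + 1) = (n + 1 + k) + 1 := by omega
      rw [this, obsSeq, ih, hAt _ (by omega)]
      rfl
  have hHigh' : ∀ i, ρ.length ≤ i → obsSeq rec i = [o] := by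
    intro i hi
    have : i = n + 1 + (i - (n + 1)) := by omega
    rw [this]; exact hHigh _
  -- prefix positions agree
  have hpre : ∀ (i : ℕ) (h : i < ρ'.length) (h' : i < ρ''.length), i < ρ.length →
      ρ'.get ⟨i, h⟩ = ρ''.get ⟨i, h'⟩ := by
    intro i h h' hi
    have e1 := hp.getElem (i := i) hi
    have e2 := hp'.getElem (i := i) hi
    simp only [List.get_eq_getElem]
    rw [← e1, ← e2]
  constructor
  · intro hst
    have hlen := hst.length_eq
    have hget := (List.forall₂_iff_get.mp hst).2
    refine ⟨hlen, ?_⟩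
    intro i h h' o' ho'
    rcases lt_or_ge i ρ.length with hi | hi
    · rw [hpre i h h' hi]
      exact (hinterp o').refl _
    · have : o' = o := by
        have := hHigh' i hi ▸ ho'
        simpa using this
      rw [this]
      exact hget i h h'
  · intro hd
    rw [staticEq, List.forall₂_iff_get]
    refine ⟨hd.1, ?_⟩
    intro i h h'
    rcases lt_or_ge i ρ.length with hi | hi
    · rw [hpre i h h' hi]
      exact (hinterp o).refl _
    · exact hd.2 i h h' o (by rw [hHigh' i hi]; simp)
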